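/- Let γ ∈ GL_n(E) be a normal element such that σ(γ)γ is regular semisimple. Then the σ-twisted centralizer T_γ := {g ∈ GL_n(E) : g⁻¹γσ(g) = γ} is contained in GL_n(F); in fact T_γ equals the centralizer of σ(γ)γ in GL_n(F), i.e. T_γ = {g ∈ GL_n(F) : g·(σ(γ)γ) = (σ(γ)γ)·g}. -/

import Mathlib

/-!
STATEMENT 2: For γ ∈ GL_n(E) normal with σ(γ)γ regular semisimple, the σ-twisted
centralizer T_γ = {g ∈ GL_n(E) : g⁻¹γσ(g) = γ} equals the centralizer of σ(γ)γ in
GL_n(F).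
-/

/-- A square matrix over a field `E` is regular semisimple if its characteristic
polynomial has `n` distinct roots in an algebraic closure of `E`. -/
def IsRegSemisimple {n : ℕ} {E : Type*} [Field E] (A : Matrix (Fin n) (Fin n) E) : Prop :=
  Multiset.card ((A.charpoly.map (algebraMap E (AlgebraicClosure E))).roots) = n ∧
    ((A.charpoly.map (algebraMap E (AlgebraicClosure E))).roots).Nodup

open Matrix Polynomial

/-- A root of the characteristic polynomial admits an eigenvector. -/
lemma root_charpoly_eigen {n : ℕ} {K : Type*} [Field K] (A : Matrix (Fin n) (Fin n) K)
    {μ : K} (h : A.charpoly.IsRoot μ) : ∃ v : Fin n → K, v ≠ 0 ∧ A.mulVec v = μ • v := by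
  have hdet : (Matrix.scalar (Fin n) μ - A).det = 0 := by
    have h2 := RingHom.map_det (Polynomial.evalRingHom μ) (Matrix.charmatrix A)
    have hmap : (RingHom.mapMatrix (Polynomial.evalRingHom μ)) (Matrix.charmatrix A)
        = Matrix.scalar (Fin n) μ - A := by
      ext i j
      by_cases hij : i = j
      · subst hij; simp
      · simp [Matrix.charmatrix_apply_ne _ _ _ hij, Matrix.scalar_apply,
          Matrix.diagonal_apply_ne _ hij]
    rw [hmap] at h2
    rw [← h2]
    simpa [Matrix.charpoly] using h
  obtain ⟨v, hv0, hv⟩ := (Matrix.exists_mulVec_eq_zero_iff).2 hdet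
  refine ⟨v, hv0, ?_⟩
  rw [Matrix.sub_mulVec] at hv
  have hs : (Matrix.scalar (Fin n) μ).mulVec v = μ • v := by
    ext i
    simp [Matrix.scalar_apply, Matrix.mulVec_diagonal]
  rw [hs] at hv
  exact (sub_eq_zero.mp hv).symm

/-- Two matrices commuting with a regular semisimple matrix commute with each other. -/
lemma commute_of_commute_rss {n : ℕ} (hn : 1 ≤ n) {K : Type*} [Field K]
    (A B C : Matrix (Fin n) (Fin n) K)
    (hcard : Multiset.card A.charpoly.roots = n) (hnd : A.charpoly.roots.Nodup)
    (hB : A * B = B * A) (hC : A * C = C * A) : B * C = C * B := by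
  classical
  have : Nonempty (Fin n) := ⟨⟨0, hn⟩⟩
  set t : Finset K := A.charpoly.roots.toFinset with ht
  have htcard : t.card = n := by
    rw [ht, Multiset.toFinset_card_of_nodup hnd, hcard]
  let e : t ≃ Fin n := t.equivFinOfCardEq htcard
  let lam : Fin n → K := fun i => (e.symm i : K)
  have hlaminj : Function.Injective lam := fun i j hij => by
    apply e.symm.injective; exact Subtype.ext hij
  have hroot : ∀ i, A.charpoly.IsRoot (lam i) := fun i => by
    have : (lam i) ∈ A.charpoly.roots.toFinset := (e.symm i).2
    exact Polynomial.isRoot_of_mem_roots (Multiset.mem_toFinset.mp this)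
  choose v hv0 hveig using fun i => root_charpoly_eigen A (hroot i)
  have hli : LinearIndependent K v := by
    apply Module.End.eigenvectors_linearIndependent' (Matrix.mulVecLin A) lam hlaminj
    intro i
    constructor
    · rw [Module.End.mem_eigenspace_iff]
      simpa [Matrix.mulVecLin_apply] using hveig i
    · exact hv0 i
  have hfr : Fintype.card (Fin n) = Module.finrank K (Fin n → K) := by simp
  let b : Module.Basis (Fin n) K (Fin n → K) := basisOfLinearIndependentOfCardEqFinrank hli hfr
  have hb : ⇑b = v := coe_basisOfLinearIndependentOfCardEqFinrank hli hfr
  have hdiag : ∀ (M : Matrix (Fin n) (Fin n) K), A * M = M * A →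
      ∀ i, ∃ c : K, M.mulVec (v i) = c • v i := by
    intro M hM i
    set w := M.mulVec (v i) with hw
    have hAw : A.mulVec w = lam i • w := by
      rw [hw, Matrix.mulVec_mulVec, hM, ← Matrix.mulVec_mulVec, hveig i,
        Matrix.mulVec_smul]
    set c : Fin n → K := fun j => b.repr w j with hc
    have hwsum : w = ∑ j, c j • v j := by
      rw [← hb]; exact (b.sum_repr w).symm
    have hzero : ∑ j, ((lam j - lam i) * c j) • v j = 0 := by
      have h1 : A.mulVec w = ∑ j, (lam j * c j) • v j := by
        rw [hwsum]
        have := map_sum A.mulVecLin (fun j => c j • v j) Finset.univ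
        simp only [Matrix.mulVecLin_apply] at this
        rw [this]
        refine Finset.sum_congr rfl fun j _ => ?_
        rw [Matrix.mulVec_smul, hveig j, smul_smul, mul_comm]
      have h2 : lam i • w = ∑ j, (lam i * c j) • v j := by
        rw [hwsum, Finset.smul_sum]
        congr 1; ext j
        rw [smul_smul]
      calc ∑ j, ((lam j - lam i) * c j) • v j
          = ∑ j, ((lam j * c j) • v j - (lam i * c j) • v j) := by
            congr 1; ext j; rw [sub_mul, sub_smul]
        _ = ∑ j, (lam j * c j) • v j - ∑ j, (lam i * c j) • v j := Finset.sum_sub_distrib _ _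
        _ = 0 := by rw [← h1, ← h2, hAw, sub_self]
    have hcj : ∀ j, j ≠ i → c j = 0 := by
      intro j hj
      have := (Fintype.linearIndependent_iff.mp hli) _ hzero j
      have hne : lam j - lam i ≠ 0 := sub_ne_zero.mpr (fun h => hj (hlaminj h))
      exact (mul_eq_zero.mp this).resolve_left hne
    refine ⟨c i, ?_⟩
    rw [hwsum, Finset.sum_eq_single i (fun j _ hj => by rw [hcj j hj, zero_smul]) (by simp)]
  choose bc hbc using hdiag B hB
  choose cc hcc using hdiag C hC
  apply Matrix.toLin'.injective
  apply b.ext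
  intro i
  show Matrix.toLin' (B * C) (b i) = Matrix.toLin' (C * B) (b i)
  rw [Matrix.toLin'_apply, Matrix.toLin'_apply, hb]
  rw [← Matrix.mulVec_mulVec, ← Matrix.mulVec_mulVec, hbc, hcc,
    Matrix.mulVec_smul, Matrix.mulVec_smul, hbc, hcc, smul_smul, smul_smul, mul_comm]

theorem twisted_centralizer_eq_rational_centralizer
    {F E : Type*} [Field F] [Field E] [Algebra F E]
    (σ : E ≃ₐ[F] E)
    (hσ2 : ∀ x : E, σ (σ x) = x)
    (hfix : ∀ x : E, σ x = x ↔ x ∈ Set.range (algebraMap F E))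
    (hdeg : Module.finrank F E = 2)
    (n : ℕ) (hn : 1 ≤ n)
    (γ : Matrix (Fin n) (Fin n) E) (hγ : IsUnit γ)
    (hnormal : ∀ i j, ((γ.map ⇑σ) * γ) i j ∈ Set.range (algebraMap F E))
    (hrss : IsRegSemisimple ((γ.map ⇑σ) * γ)) :
    {g : Matrix (Fin n) (Fin n) E | IsUnit g ∧ g⁻¹ * γ * g.map ⇑σ = γ} =
    {g : Matrix (Fin n) (Fin n) E | IsUnit g ∧
      (∀ i j, g i j ∈ Set.range (algebraMap F E)) ∧
      g * ((γ.map ⇑σ) * γ) = ((γ.map ⇑σ) * γ) * g} := by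
  classical
  set A : Matrix (Fin n) (Fin n) E := (γ.map ⇑σ) * γ with hA
  set K := AlgebraicClosure E
  set φ : E →+* K := algebraMap E K with hφ
  have hφinj : Function.Injective φ := φ.injective
  -- basic σ facts on matrices
  have mσ_mul : ∀ X Y : Matrix (Fin n) (Fin n) E,
      (X * Y).map ⇑σ = X.map ⇑σ * Y.map ⇑σ := fun X Y =>
    Matrix.map_mul (f := σ.toRingEquiv.toRingHom)
  have σσ_map : ∀ X : Matrix (Fin n) (Fin n) E, (X.map ⇑σ).map ⇑σ = X := by
    intro X; ext i j; simp [Matrix.map_apply, hσ2]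
  have hσA : A.map ⇑σ = A := by
    ext i j
    exact (hfix (A i j)).2 (hnormal i j)
  -- γ commutes with A
  have hγA' : γ * γ.map ⇑σ = A := by
    have : (A.map ⇑σ) = γ * γ.map ⇑σ := by
      rw [hA, mσ_mul, σσ_map]
    rw [← this, hσA]
  have hAγ : A * γ = γ * A := by
    conv_lhs => rw [← hγA']
    conv_rhs => rw [hA]
    rw [Matrix.mul_assoc]
  -- the key transfer lemma over the algebraic closure
  have keyE : ∀ X Y : Matrix (Fin n) (Fin n) E, A * X = X * A → A * Y = Y * A →
      X * Y = Y * X := by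
    intro X Y hX hY
    have hmul : ∀ P Q : Matrix (Fin n) (Fin n) E,
        (P * Q).map ⇑φ = P.map ⇑φ * Q.map ⇑φ := fun P Q => Matrix.map_mul
    have hinj : Function.Injective
        (fun M : Matrix (Fin n) (Fin n) E => M.map ⇑φ) := Matrix.map_injective hφinj
    have hcp : (A.map ⇑φ).charpoly = A.charpoly.map φ := Matrix.charpoly_map A φ
    have hc := commute_of_commute_rss hn (A.map ⇑φ) (X.map ⇑φ) (Y.map ⇑φ)
      (by rw [hcp]; exact hrss.1) (by rw [hcp]; exact hrss.2)
      (by rw [← hmul, ← hmul, hX]) (by rw [← hmul, ← hmul, hY])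
    apply hinj
    simpa [hmul] using hc
  have hγg_comm : ∀ g : Matrix (Fin n) (Fin n) E, A * g = g * A → γ * g = g * γ :=
    fun g hg => keyE γ g hAγ hg
  -- inverse facts
  have hdu : IsUnit γ.det := (Matrix.isUnit_iff_isUnit_det γ).1 hγ
  have hγi : γ⁻¹ * γ = 1 := Matrix.nonsing_inv_mul γ hdu
  ext g
  simp only [Set.mem_setOf_eq]
  constructor
  · rintro ⟨hg, heq⟩
    have hgd : IsUnit g.det := (Matrix.isUnit_iff_isUnit_det g).1 hg
    have hgi : g * g⁻¹ = 1 := Matrix.mul_nonsing_inv g hgd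
    -- (1) γ σ(g) = g γ
    have h1 : γ * g.map ⇑σ = g * γ := by
      have := congrArg (fun M => g * M) heq
      simpa [← Matrix.mul_assoc, hgi, Matrix.one_mul] using this
    -- (2) σ(γ) g = σ(g) σ(γ)
    have h2 : γ.map ⇑σ * g = g.map ⇑σ * γ.map ⇑σ := by
      have h := congrArg (fun M => M.map ⇑σ) h1
      rw [mσ_mul γ (g.map ⇑σ), mσ_mul g γ, σσ_map g] at h
      exact h
    -- (3) A σ(g) = σ(g) A
    have h3 : A * g.map ⇑σ = g.map ⇑σ * A := by
      rw [hA]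
      calc γ.map ⇑σ * γ * g.map ⇑σ = γ.map ⇑σ * (γ * g.map ⇑σ) := by rw [Matrix.mul_assoc]
        _ = γ.map ⇑σ * (g * γ) := by rw [h1]
        _ = (γ.map ⇑σ * g) * γ := by rw [Matrix.mul_assoc]
        _ = (g.map ⇑σ * γ.map ⇑σ) * γ := by rw [h2]
        _ = g.map ⇑σ * (γ.map ⇑σ * γ) := by rw [Matrix.mul_assoc]
    -- (4) A g = g A
    have h4 : A * g = g * A := by
      have h := congrArg (fun M => M.map ⇑σ) h3
      rw [mσ_mul A (g.map ⇑σ), mσ_mul (g.map ⇑σ) A, σσ_map g, hσA] at h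
      exact h
    -- γ commutes with g
    have h5 : γ * g = g * γ := hγg_comm g h4
    -- σ(g) = g
    have h6 : g.map ⇑σ = g := by
      have : γ * g.map ⇑σ = γ * g := by rw [h1, ← h5]
      have := congrArg (fun M => γ⁻¹ * M) this
      simpa [← Matrix.mul_assoc, hγi, Matrix.one_mul] using this
    refine ⟨hg, fun i j => ?_, h4.symm⟩
    exact (hfix (g i j)).1 (by have := congrFun (congrFun h6 i) j; simpa [Matrix.map_apply] using this)
  · rintro ⟨hg, hgF, hcomm⟩
    have h6 : g.map ⇑σ = g := by
      ext i j
      simp only [Matrix.map_apply]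
      exact (hfix (g i j)).2 (hgF i j)
    have h5 : γ * g = g * γ := hγg_comm g hcomm.symm
    have hgd : IsUnit g.det := (Matrix.isUnit_iff_isUnit_det g).1 hg
    have hgi : g⁻¹ * g = 1 := Matrix.nonsing_inv_mul g hgd
    refine ⟨hg, ?_⟩
    rw [h6]
    calc g⁻¹ * γ * g = g⁻¹ * (γ * g) := by rw [Matrix.mul_assoc]
      _ = g⁻¹ * (g * γ) := by rw [h5]
      _ = (g⁻¹ * g) * γ := by rw [Matrix.mul_assoc]
      _ = γ := by rw [hgi, Matrix.one_mul]
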